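/- arXiv:1606.07652 — 3 statements merged into one kernel-verified Lean document; each statement's English description precedes it below -/
import Mathlib

section
/- Let X = {x_1, …, x_N} ⊂ ℝ be points with separation distance q := (1/2) min_{j≠k} |x_j − x_k| > 0, and let σ = 2π/q. Then for every j, ∑_{k≠j} sinc²(σ(x_j − x_k)/2) ≤ 2π²/(σq)² = 1/2, where sinc(t) = sin(t)/t. -/
open Real

noncomputable def sinc (t : ℝ) : ℝ := if t = 0 then 1 else Real.sin t / t

lemma sum_inv_sq_int_aux {ι : Type*} (S : Finset ι) (g : ι → ℤ)
    (hg : Set.InjOn g S) (hpos : ∀ k ∈ S, 0 < g k) :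
    ∑ k ∈ S, (1 : ℝ) / (g k : ℝ) ^ 2 ≤ π ^ 2 / 6 := by
  have hinj : Set.InjOn (fun k => (g k).natAbs) S := by
    intro a ha b hb hab
    apply hg ha hb
    have h1 := hpos a ha
    have h2 := hpos b hb
    simp only at hab
    omega
  have heq : ∑ k ∈ S, (1 : ℝ) / (g k : ℝ) ^ 2
      = ∑ n ∈ S.image (fun k => (g k).natAbs), (1 : ℝ) / (n : ℝ) ^ 2 := by
    rw [Finset.sum_image (fun a ha b hb hab => hinj ha hb hab)]
    refine Finset.sum_congr rfl fun k hk => ?_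
    have : ((g k).natAbs : ℝ) = |(g k : ℝ)| := by
      rw [Nat.cast_natAbs]; push_cast [Int.cast_abs]; ring
    rw [this, sq_abs]
  rw [heq]
  exact sum_le_hasSum _ (fun i _ => by positivity) hasSum_zeta_two

lemma sum_inv_sq_int {ι : Type*} [DecidableEq ι] (S : Finset ι) (g : ι → ℤ)
    (hg : Set.InjOn g S) (h0 : ∀ k ∈ S, g k ≠ 0) :
    ∑ k ∈ S, (1 : ℝ) / (g k : ℝ) ^ 2 ≤ π ^ 2 / 3 := by
  classical
  have hsplit := Finset.sum_filter_add_sum_filter_not S (fun k => 0 < g k)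
    (fun k => (1 : ℝ) / (g k : ℝ) ^ 2)
  have h1 : ∑ k ∈ S.filter (fun k => 0 < g k), (1 : ℝ) / (g k : ℝ) ^ 2 ≤ π ^ 2 / 6 := by
    apply sum_inv_sq_int_aux _ g
    · exact hg.mono (fun a ha => (Finset.mem_filter.mp ha).1)
    · intro k hk; exact (Finset.mem_filter.mp hk).2
  have h2 : ∑ k ∈ S.filter (fun k => ¬ 0 < g k), (1 : ℝ) / (g k : ℝ) ^ 2 ≤ π ^ 2 / 6 := by
    have key := sum_inv_sq_int_aux (S.filter (fun k => ¬ 0 < g k)) (fun k => -g k)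
      (by
        intro a ha b hb hab
        exact hg (Finset.mem_filter.mp ha).1 (Finset.mem_filter.mp hb).1 (by
          simp only at hab; omega))
      (by
        intro k hk
        have ha := (Finset.mem_filter.mp hk).2
        have hb := h0 k (Finset.mem_filter.mp hk).1
        show 0 < -g k
        omega)
    calc ∑ k ∈ S.filter (fun k => ¬ 0 < g k), (1 : ℝ) / (g k : ℝ) ^ 2
        = ∑ k ∈ S.filter (fun k => ¬ 0 < g k), (1 : ℝ) / (((fun k => -g k) k : ℤ) : ℝ) ^ 2 := by
          refine Finset.sum_congr rfl fun k hk => ?_; push_cast; ring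
      _ ≤ π ^ 2 / 6 := key
  linarith

theorem stmt_8 (N : ℕ) (hN : 1 < N) (x : Fin N → ℝ) (hinj : Function.Injective x)
    (q : ℝ) (hq0 : 0 < q)
    (hq : q = (1 / 2) *
      (Finset.univ.offDiag.inf'
        (by
          obtain ⟨a, b, hab⟩ := Fintype.exists_pair_of_one_lt_card
            (by simpa using hN) (α := Fin N)
          exact ⟨(a, b), Finset.mem_offDiag.mpr ⟨Finset.mem_univ _, Finset.mem_univ _, hab⟩⟩)
        (fun p => |x p.1 - x p.2|)))
    (σ : ℝ) (hσ : σ = 2 * π / q) :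
    ∀ j, (∑ k ∈ Finset.univ.erase j, (_root_.sinc (σ * (x j - x k) / 2)) ^ 2)
        ≤ 2 * π ^ 2 / (σ * q) ^ 2 ∧ 2 * π ^ 2 / (σ * q) ^ 2 = 1 / 2 := by
  have hπ := Real.pi_pos
  have hσq : σ * q = 2 * π := by rw [hσ]; field_simp
  have hrhs : 2 * π ^ 2 / (σ * q) ^ 2 = 1 / 2 := by
    rw [hσq]
    rw [show (2 * π) ^ 2 = 4 * π ^ 2 by ring]
    rw [div_eq_iff (by positivity)]
    ring
  have hsep : ∀ a b : Fin N, a ≠ b → 2 * q ≤ |x a - x b| := by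
    intro a b hab
    have hmem : (a, b) ∈ (Finset.univ.offDiag : Finset (Fin N × Fin N)) :=
      Finset.mem_offDiag.mpr ⟨Finset.mem_univ _, Finset.mem_univ _, hab⟩
    have hle := Finset.inf'_le (fun p : Fin N × Fin N => |x p.1 - x p.2|) hmem
    calc 2 * q = Finset.univ.offDiag.inf' _ (fun p => |x p.1 - x p.2|) := by rw [hq]; ring
      _ ≤ |x a - x b| := hle
  intro j
  refine ⟨?_, hrhs⟩
  rw [hrhs]
  classical
  set y : Fin N → ℝ := fun k => (x k - x j) / (2 * q) with hy
  set g : Fin N → ℤ := fun k => if 0 < y k then ⌊y k⌋ else ⌈y k⌉ with hg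
  have hyabs : ∀ k, k ≠ j → 1 ≤ |y k| := by
    intro k hk
    have h := hsep k j hk
    rw [hy]
    simp only
    rw [abs_div, abs_of_pos (by linarith : (0:ℝ) < 2 * q), le_div_iff₀ (by linarith)]
    linarith
  have hg0 : ∀ k, k ≠ j → g k ≠ 0 := by
    intro k hk
    have h1 := hyabs k hk
    rw [hg]
    simp only
    by_cases hpos : 0 < y k
    · have hy1 : (1:ℝ) ≤ y k := by
        rcases abs_cases (y k) with ⟨h, _⟩ | ⟨h, _⟩ <;> linarith
      have h2 : 1 ≤ ⌊y k⌋ := Int.le_floor.mpr (by exact_mod_cast hy1)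
      rw [if_pos hpos]; omega
    · push_neg at hpos
      have hyneg : y k ≤ -1 := by
        rcases abs_cases (y k) with ⟨h, _⟩ | ⟨h, _⟩ <;> linarith
      have h2 : ⌈y k⌉ ≤ -1 := Int.ceil_le.mpr (by exact_mod_cast hyneg)
      rw [if_neg hpos.not_gt]; omega
  have hgabs : ∀ k, k ≠ j → (g k : ℝ) ^ 2 ≤ (y k) ^ 2 := by
    intro k hk
    have h1 := hyabs k hk
    rw [hg]
    simp only
    by_cases hpos : 0 < y k
    · rw [if_pos hpos]
      have hy1 : (1:ℝ) ≤ y k := by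
        rcases abs_cases (y k) with ⟨h, _⟩ | ⟨h, _⟩ <;> linarith
      have h2 : (1:ℝ) ≤ (⌊y k⌋ : ℝ) := by
        exact_mod_cast Int.le_floor.mpr (show ((1:ℤ):ℝ) ≤ y k by exact_mod_cast hy1)
      have h3 : ((⌊y k⌋ : ℝ)) ≤ y k := Int.floor_le _
      nlinarith
    · rw [if_neg hpos]
      push_neg at hpos
      have hyneg : y k ≤ -1 := by
        rcases abs_cases (y k) with ⟨h, _⟩ | ⟨h, _⟩ <;> linarith
      have h2 : ((⌈y k⌉ : ℝ)) ≤ -1 := by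
        exact_mod_cast Int.ceil_le.mpr (show y k ≤ ((-1:ℤ):ℝ) by exact_mod_cast hyneg)
      have h3 : y k ≤ ((⌈y k⌉ : ℝ)) := Int.le_ceil _
      nlinarith
  have hginj : Set.InjOn g (Finset.univ.erase j : Finset (Fin N)) := by
    intro a ha b hb hab
    simp only [Finset.coe_erase, Set.mem_diff, Set.mem_singleton_iff] at ha hb
    by_contra hne
    have haj : a ≠ j := ha.2
    have hbj : b ≠ j := hb.2
    have hyd : 1 ≤ |y a - y b| := by
      rw [hy]
      simp only
      rw [div_sub_div_same]
      have h4 : x a - x j - (x b - x j) = x a - x b := by ring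
      rw [h4, abs_div, abs_of_pos (by linarith : (0:ℝ) < 2 * q), le_div_iff₀ (by linarith)]
      linarith [hsep a b hne]
    rw [hg] at hab
    simp only at hab
    by_cases hpa : 0 < y a <;> by_cases hpb : 0 < y b
    · rw [if_pos hpa, if_pos hpb] at hab
      have h1 : ((⌊y a⌋ : ℝ)) ≤ y a := Int.floor_le _
      have h2 : y a < (⌊y a⌋ : ℝ) + 1 := Int.lt_floor_add_one _
      have h3 : ((⌊y b⌋ : ℝ)) ≤ y b := Int.floor_le _
      have h4 : y b < (⌊y b⌋ : ℝ) + 1 := Int.lt_floor_add_one _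
      have h5 : (⌊y a⌋ : ℝ) = (⌊y b⌋ : ℝ) := by exact_mod_cast hab
      rcases abs_cases (y a - y b) with ⟨h, _⟩ | ⟨h, _⟩ <;> linarith
    · rw [if_pos hpa, if_neg hpb] at hab
      push_neg at hpb
      have h1 : 1 ≤ ⌊y a⌋ := by
        have hy1 : (1:ℝ) ≤ y a := by
          rcases abs_cases (y a) with ⟨h, _⟩ | ⟨h, _⟩ <;> linarith [hyabs a haj]
        exact Int.le_floor.mpr (by exact_mod_cast hy1)
      have h2 : ⌈y b⌉ ≤ 0 := Int.ceil_le.mpr (by exact_mod_cast hpb)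
      omega
    · rw [if_neg hpa, if_pos hpb] at hab
      push_neg at hpa
      have h1 : 1 ≤ ⌊y b⌋ := by
        have hy1 : (1:ℝ) ≤ y b := by
          rcases abs_cases (y b) with ⟨h, _⟩ | ⟨h, _⟩ <;> linarith [hyabs b hbj]
        exact Int.le_floor.mpr (by exact_mod_cast hy1)
      have h2 : ⌈y a⌉ ≤ 0 := Int.ceil_le.mpr (by exact_mod_cast hpa)
      omega
    · rw [if_neg hpa, if_neg hpb] at hab
      have h1 : y a ≤ ((⌈y a⌉ : ℝ)) := Int.le_ceil _
      have h2 : ((⌈y a⌉ : ℝ)) - 1 < y a := by linarith [Int.ceil_lt_add_one (y a)]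
      have h3 : y b ≤ ((⌈y b⌉ : ℝ)) := Int.le_ceil _
      have h4 : ((⌈y b⌉ : ℝ)) - 1 < y b := by linarith [Int.ceil_lt_add_one (y b)]
      have h5 : (⌈y a⌉ : ℝ) = (⌈y b⌉ : ℝ) := by exact_mod_cast hab
      rcases abs_cases (y a - y b) with ⟨h, _⟩ | ⟨h, _⟩ <;> linarith
  have hpt : ∀ k ∈ Finset.univ.erase j,
      (_root_.sinc (σ * (x j - x k) / 2)) ^ 2 ≤ (1 / (4 * π ^ 2)) * ((1:ℝ) / (g k : ℝ) ^ 2) := by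
    intro k hk
    have hkj : k ≠ j := Finset.ne_of_mem_erase hk
    have ht : σ * (x j - x k) / 2 = -(2 * π * y k) := by
      rw [hσ, hy]; simp only; field_simp; ring
    have hyk : 1 ≤ |y k| := hyabs k hkj
    have hyk0 : y k ≠ 0 := by
      intro h; rw [h, abs_zero] at hyk; linarith
    have ht0 : σ * (x j - x k) / 2 ≠ 0 := by
      rw [ht]; simp only [neg_ne_zero]; positivity
    rw [_root_.sinc, if_neg ht0, div_pow]
    have htsq : (σ * (x j - x k) / 2) ^ 2 = 4 * π ^ 2 * (y k) ^ 2 := by rw [ht]; ring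
    rw [htsq]
    have hgk := hgabs k hkj
    have hg0k := hg0 k hkj
    have hgpos : (0:ℝ) < (g k : ℝ) ^ 2 := by
      have hne : (g k : ℝ) ≠ 0 := Int.cast_ne_zero.mpr hg0k
      positivity
    have hy2pos : (0:ℝ) < (y k) ^ 2 := by positivity
    have hsin : Real.sin (σ * (x j - x k) / 2) ^ 2 ≤ 1 := by
      nlinarith [Real.neg_one_le_sin (σ * (x j - x k) / 2),
        Real.sin_le_one (σ * (x j - x k) / 2)]
    calc Real.sin (σ * (x j - x k) / 2) ^ 2 / (4 * π ^ 2 * (y k) ^ 2)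
        ≤ 1 / (4 * π ^ 2 * (y k) ^ 2) := by
          exact div_le_div_of_nonneg_right hsin (by positivity)
      _ ≤ (1 / (4 * π ^ 2)) * ((1:ℝ) / (g k : ℝ) ^ 2) := by
          rw [div_mul_div_comm, one_mul]
          apply one_div_le_one_div_of_le (by positivity)
          nlinarith
  calc (∑ k ∈ Finset.univ.erase j, (_root_.sinc (σ * (x j - x k) / 2)) ^ 2)
      ≤ ∑ k ∈ Finset.univ.erase j, (1 / (4 * π ^ 2)) * ((1:ℝ) / (g k : ℝ) ^ 2) :=
        Finset.sum_le_sum hpt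
    _ = (1 / (4 * π ^ 2)) * ∑ k ∈ Finset.univ.erase j, (1:ℝ) / (g k : ℝ) ^ 2 :=
        (Finset.mul_sum _ _ _).symm
    _ ≤ (1 / (4 * π ^ 2)) * (π ^ 2 / 3) := by
        apply mul_le_mul_of_nonneg_left _ (by positivity)
        exact sum_inv_sq_int _ g hginj (fun k hk => hg0 k (Finset.ne_of_mem_erase hk))
    _ ≤ 1 / 2 := by
        rw [div_mul_div_comm, one_mul]
        rw [div_le_div_iff₀ (by positivity) (by norm_num)]
        nlinarith
end

section
/- Let Φ: ℝ → ℝ be continuous and integrable with Fourier transform Φ̂ ≥ 0, and suppose Φ̂ is nonincreasing on [0, σ] and even. Let Φ_σ(x) = (2π)^{-1}∫_{-σ}^{σ} Φ̂(ξ)e^{iξx}dξ. Then for all λ ∈ ℝ^N and points x_1,…,x_N, ∑_{j,k} λ_j λ_k Φ_σ(x_j − x_k) ≥ (σ/(2π)) Φ̂(σ) ∑_{j,k} λ_j λ_k sinc²(σ(x_j − x_k)/2). -/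
set_option maxHeartbeats 1000000

open Real MeasureTheory

lemma fejer_real (σ t : ℝ) (hσ : 0 < σ) :
    ∫ ξ in (0:ℝ)..σ, (1 - ξ/σ) * Real.cos (ξ * t) = σ/2 * _root_.sinc (σ*t/2)^2 := by
  by_cases ht : t = 0
  · subst ht
    have h0 : _root_.sinc (0:ℝ) = 1 := if_pos rfl
    simp only [mul_zero, zero_div, Real.cos_zero, mul_one, h0, one_pow]
    rw [intervalIntegral.integral_sub intervalIntegrable_const
      ((Continuous.intervalIntegrable (by continuity) 0 σ : IntervalIntegrable (fun ξ : ℝ => ξ/σ) volume 0 σ))]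
    simp only [intervalIntegral.integral_const, smul_eq_mul, mul_one]
    rw [intervalIntegral.integral_div, integral_id]
    field_simp
    ring
  · have hst : σ * t / 2 ≠ 0 := by positivity
    set G : ℝ → ℝ := fun ξ => (1 - ξ/σ) * Real.sin (ξ*t)/t - Real.cos (ξ*t)/(σ*t^2) with hG
    have hderiv : ∀ ξ ∈ Set.uIcc (0:ℝ) σ, HasDerivAt G ((1 - ξ/σ) * Real.cos (ξ * t)) ξ := by
      intro ξ _
      have h1 : HasDerivAt (fun ξ : ℝ => 1 - ξ/σ) (-(1/σ)) ξ := by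
        simpa using ((hasDerivAt_id ξ).div_const σ).const_sub 1
      have hmul : HasDerivAt (fun ξ : ℝ => ξ * t) t ξ := by
        simpa using (hasDerivAt_id ξ).mul_const t
      have h2 : HasDerivAt (fun ξ : ℝ => Real.sin (ξ*t)) (Real.cos (ξ*t) * t) ξ :=
        hmul.sin
      have h3 : HasDerivAt (fun ξ : ℝ => Real.cos (ξ*t)) (-Real.sin (ξ*t) * t) ξ :=
        hmul.cos
      have := ((h1.mul h2).div_const t).sub (h3.div_const (σ*t^2))
      refine this.congr_deriv ?_
      field_simp
      ring
    have hint : IntervalIntegrable (fun ξ => (1 - ξ/σ) * Real.cos (ξ * t)) volume 0 σ :=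
      (Continuous.intervalIntegrable (by continuity) 0 σ)
    rw [intervalIntegral.integral_eq_sub_of_hasDerivAt hderiv hint]
    have h4 : Real.sin (σ*t/2)^2 = 1/2 - Real.cos (σ*t)/2 := by
      have := Real.sin_sq_eq_half_sub (σ*t/2)
      rw [this]
      ring_nf
    simp only [hG, _root_.sinc, if_neg hst, zero_mul, Real.sin_zero, Real.cos_zero, zero_div,
      div_self hσ.ne', sub_self, zero_mul, zero_div, zero_sub, mul_zero, one_mul]
    rw [div_pow, h4]
    field_simp
    ring

lemma fejer_complex (σ : ℝ) (hσ : 0 < σ) (t : ℝ) :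
    ∫ ξ in (-σ)..σ, ((1 - |ξ|/σ : ℝ):ℂ) * Complex.exp (Complex.I * ξ * t)
      = ((σ * _root_.sinc (σ*t/2)^2 : ℝ) : ℂ) := by
  set f : ℝ → ℂ := fun ξ => ((1 - |ξ|/σ : ℝ):ℂ) * Complex.exp (Complex.I * ξ * t) with hf
  have hcontf : Continuous f := by
    apply Continuous.mul
    · exact Complex.continuous_ofReal.comp (by continuity)
    · exact Complex.continuous_exp.comp (by continuity)
  have hsplit : ∫ ξ in (-σ)..σ, f ξ = (∫ ξ in (-σ)..(0:ℝ), f ξ) + ∫ ξ in (0:ℝ)..σ, f ξ :=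
    (intervalIntegral.integral_add_adjacent_intervals
      (hcontf.intervalIntegrable _ _) (hcontf.intervalIntegrable _ _)).symm
  have hneg : ∫ ξ in (-σ)..(0:ℝ), f ξ = ∫ ξ in (0:ℝ)..σ, f (-ξ) := by
    rw [intervalIntegral.integral_comp_neg]
    norm_num
  have hi1 : IntervalIntegrable (fun ξ : ℝ => f (-ξ)) volume 0 σ :=
    ((hcontf.comp continuous_neg : Continuous fun ξ : ℝ => f (-ξ))).intervalIntegrable _ _
  rw [hsplit, hneg, ← intervalIntegral.integral_add hi1 (hcontf.intervalIntegrable _ _)]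
  have hcongr : ∀ ξ ∈ Set.uIcc (0:ℝ) σ,
      f (-ξ) + f ξ = (((1 - ξ/σ) * Real.cos (ξ*t) * 2 : ℝ) : ℂ) := by
    intro ξ hξ
    rw [Set.uIcc_of_le hσ.le] at hξ
    have habs : |ξ| = ξ := abs_of_nonneg hξ.1
    have habs' : |(-ξ)| = ξ := by rw [abs_neg, habs]
    have e1 : Complex.I * (ξ:ℝ) * t = ((ξ*t : ℝ) : ℂ) * Complex.I := by
      push_cast; ring
    have e2 : Complex.I * ((-ξ:ℝ):ℂ) * t = ((-(ξ*t) : ℝ) : ℂ) * Complex.I := by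
      push_cast; ring
    simp only [hf, habs, habs', e1, e2, Complex.exp_mul_I]
    push_cast
    simp [Complex.cos_neg, Complex.sin_neg]
    ring
  rw [intervalIntegral.integral_congr hcongr]
  rw [intervalIntegral.integral_ofReal]
  norm_cast
  have := fejer_real σ t hσ
  rw [intervalIntegral.integral_mul_const]
  rw [this]
  ring


lemma sum_exp_eq (N : ℕ) (lam x : Fin N → ℝ) (ξ : ℝ) :
    ∑ j, ∑ k, ((lam j * lam k : ℝ) : ℂ) * Complex.exp (Complex.I * ξ * ((x j - x k : ℝ) : ℂ))
      = ((Complex.normSq (∑ j, ((lam j : ℝ):ℂ) * Complex.exp (Complex.I * ξ * (x j))) : ℝ) : ℂ) := by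
  set S : ℂ := ∑ j, ((lam j : ℝ):ℂ) * Complex.exp (Complex.I * ξ * (x j)) with hS
  have hconj : (starRingEnd ℂ) S = ∑ k, ((lam k : ℝ):ℂ) * Complex.exp (-(Complex.I * ξ * (x k))) := by
    rw [hS, map_sum]
    refine Finset.sum_congr rfl fun k _ => ?_
    rw [map_mul, ← Complex.exp_conj]
    simp [map_mul, Complex.conj_I, Complex.conj_ofReal]
  rw [← Complex.mul_conj, hconj, hS, Finset.sum_mul_sum]
  refine Finset.sum_congr rfl fun j _ => Finset.sum_congr rfl fun k _ => ?_
  rw [mul_mul_mul_comm, ← Complex.exp_add]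
  push_cast
  congr 1
  ring

lemma swap_lemma (σ : ℝ) (w : ℝ → ℝ) (hw : Continuous w)
    (N : ℕ) (lam x : Fin N → ℝ) :
    ∫ ξ in (-σ)..σ, ((w ξ : ℝ):ℂ) *
        ((Complex.normSq (∑ j, ((lam j : ℝ):ℂ) * Complex.exp (Complex.I * ξ * (x j))) : ℝ) : ℂ)
      = ∑ j, ∑ k, ((lam j * lam k : ℝ):ℂ) *
          ∫ ξ in (-σ)..σ, ((w ξ : ℝ):ℂ) * Complex.exp (Complex.I * ξ * ((x j - x k : ℝ) : ℂ)) := by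
  have hptwise : ∀ ξ : ℝ, ((w ξ : ℝ):ℂ) *
      ((Complex.normSq (∑ j, ((lam j : ℝ):ℂ) * Complex.exp (Complex.I * ξ * (x j))) : ℝ) : ℂ)
      = ∑ j, ∑ k, ((lam j * lam k : ℝ):ℂ) *
          (((w ξ : ℝ):ℂ) * Complex.exp (Complex.I * ξ * ((x j - x k : ℝ) : ℂ))) := by
    intro ξ
    rw [← sum_exp_eq, Finset.mul_sum]
    refine Finset.sum_congr rfl fun j _ => ?_
    rw [Finset.mul_sum]
    refine Finset.sum_congr rfl fun k _ => ?_
    ring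
  have hci : ∀ (c : ℝ), Continuous fun ξ : ℝ =>
      ((w ξ : ℝ):ℂ) * Complex.exp (Complex.I * ξ * (c : ℝ)) := by
    intro c
    exact (Complex.continuous_ofReal.comp hw).mul (Complex.continuous_exp.comp
      ((continuous_const.mul Complex.continuous_ofReal).mul continuous_const))
  have hii2 : ∀ j k : Fin N, IntervalIntegrable (fun ξ : ℝ => ((lam j * lam k : ℝ):ℂ) *
      (((w ξ : ℝ):ℂ) * Complex.exp (Complex.I * ξ * ((x j - x k : ℝ) : ℂ)))) volume (-σ) σ :=
    fun j k => (continuous_const.mul (hci (x j - x k))).intervalIntegrable _ _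
  have hii1 : ∀ j : Fin N, IntervalIntegrable (fun ξ : ℝ => ∑ k, ((lam j * lam k : ℝ):ℂ) *
      (((w ξ : ℝ):ℂ) * Complex.exp (Complex.I * ξ * ((x j - x k : ℝ) : ℂ)))) volume (-σ) σ := by
    intro j
    have h := IntervalIntegrable.sum (f := fun k ξ => ((lam j * lam k : ℝ):ℂ) *
      (((w ξ : ℝ):ℂ) * Complex.exp (Complex.I * ξ * ((x j - x k : ℝ) : ℂ))))
      Finset.univ (fun k _ => hii2 j k)
    simpa [Finset.sum_fn] using h
  simp only [hptwise]
  rw [intervalIntegral.integral_finset_sum (μ := volume) (s := Finset.univ)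
    (f := fun j ξ => ∑ k, ((lam j * lam k : ℝ):ℂ) *
      (((w ξ : ℝ):ℂ) * Complex.exp (Complex.I * ξ * ((x j - x k : ℝ) : ℂ)))) (fun j _ => hii1 j)]
  refine Finset.sum_congr rfl fun j _ => ?_
  rw [intervalIntegral.integral_finset_sum (μ := volume) (s := Finset.univ)
    (f := fun k ξ => ((lam j * lam k : ℝ):ℂ) *
      (((w ξ : ℝ):ℂ) * Complex.exp (Complex.I * ξ * ((x j - x k : ℝ) : ℂ)))) (fun k _ => hii2 j k)]
  exact Finset.sum_congr rfl fun k _ => intervalIntegral.integral_const_mul _ _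

theorem stmt_9 (Φ : ℝ → ℝ) (hcont : Continuous Φ) (hint : Integrable Φ)
    (Phat : ℝ → ℝ)
    (hFT : ∀ ξ : ℝ, (Phat ξ : ℂ) = ∫ x : ℝ, (Φ x : ℂ) * Complex.exp (-(Complex.I * ξ * x)))
    (hnonneg : ∀ ξ, 0 ≤ Phat ξ) (heven : ∀ ξ, Phat (-ξ) = Phat ξ)
    (σ : ℝ) (hσ : 0 < σ) (hmono : AntitoneOn Phat (Set.Icc 0 σ))
    (Φσ : ℝ → ℝ)
    (hΦσ : ∀ x : ℝ, (Φσ x : ℂ) =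
      (1 / (2 * (π : ℂ))) * ∫ ξ in (-σ)..σ, (Phat ξ : ℂ) * Complex.exp (Complex.I * ξ * x))
    (N : ℕ) (lam : Fin N → ℝ) (x : Fin N → ℝ) :
    (∑ j, ∑ k, lam j * lam k * Φσ (x j - x k))
      ≥ (σ / (2 * π)) * Phat σ *
        ∑ j, ∑ k, lam j * lam k * (_root_.sinc (σ * (x j - x k) / 2)) ^ 2 := by
  -- continuity of Phat
  have hgc : Continuous fun ξ : ℝ => ∫ x : ℝ, (Φ x : ℂ) * Complex.exp (-(Complex.I * ξ * x)) := by
    apply MeasureTheory.continuous_of_dominated (bound := fun a => |Φ a|)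
    · intro ξ
      apply Continuous.aestronglyMeasurable
      exact (Complex.continuous_ofReal.comp hcont).mul (Complex.continuous_exp.comp
        ((continuous_const.mul Complex.continuous_ofReal).neg))
    · intro ξ
      filter_upwards with a
      have h1 : -(Complex.I * ξ * a) = ((-(ξ*a) : ℝ):ℂ) * Complex.I := by push_cast; ring
      have h2 : ‖Complex.exp (-(Complex.I * ξ * a))‖ = 1 := by
        rw [h1, Complex.norm_exp_ofReal_mul_I]
      rw [norm_mul, h2, mul_one, Complex.norm_real, Real.norm_eq_abs]
    · exact hint.abs
    · filter_upwards with a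
      exact continuous_const.mul (Complex.continuous_exp.comp
        (((continuous_const.mul Complex.continuous_ofReal).mul continuous_const).neg))
  have hPc : Continuous Phat := by
    have he : Phat = fun ξ : ℝ => (∫ x : ℝ, (Φ x : ℂ) * Complex.exp (-(Complex.I * ξ * x))).re := by
      funext ξ
      rw [← hFT ξ, Complex.ofReal_re]
    rw [he]
    exact Complex.continuous_re.comp hgc
  -- the exponential sum and its normSq
  set nS : ℝ → ℝ := fun ξ =>
    Complex.normSq (∑ j, ((lam j : ℝ):ℂ) * Complex.exp (Complex.I * ξ * (x j))) with hnS
  have hnSc : Continuous nS := by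
    apply Complex.continuous_normSq.comp
    exact continuous_finset_sum _ fun j _ => continuous_const.mul (Complex.continuous_exp.comp
      ((continuous_const.mul Complex.continuous_ofReal).mul continuous_const))
  have hnS0 : ∀ ξ, 0 ≤ nS ξ := fun ξ => Complex.normSq_nonneg _
  set w : ℝ → ℝ := fun ξ => 1 - |ξ|/σ with hwdef
  have hwc : Continuous w := continuous_const.sub (continuous_abs.div_const σ)
  -- Claim 1
  have claim1 : (∑ j, ∑ k, lam j * lam k * Φσ (x j - x k))
      = (1/(2*π)) * ∫ ξ in (-σ)..σ, Phat ξ * nS ξ := by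
    have hAc : ∫ ξ in (-σ)..σ, ((Phat ξ : ℝ):ℂ) * ((nS ξ : ℝ):ℂ)
        = ((∫ ξ in (-σ)..σ, Phat ξ * nS ξ : ℝ) : ℂ) := by
      rw [← intervalIntegral.integral_ofReal]
      exact intervalIntegral.integral_congr fun ξ _ => (Complex.ofReal_mul _ _).symm
    apply Complex.ofReal_injective
    rw [Complex.ofReal_mul, ← hAc]
    simp only [hnS]
    rw [swap_lemma σ Phat hPc N lam x]
    push_cast
    simp only [Finset.mul_sum]
    refine Finset.sum_congr rfl fun j _ => Finset.sum_congr rfl fun k _ => ?_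
    have h := hΦσ (x j - x k)
    push_cast at h
    rw [h]
    ring
  -- Claim 2
  have claim2 : σ * ∑ j, ∑ k, lam j * lam k * (_root_.sinc (σ * (x j - x k) / 2)) ^ 2
      = ∫ ξ in (-σ)..σ, w ξ * nS ξ := by
    have hAc : ∫ ξ in (-σ)..σ, ((w ξ : ℝ):ℂ) * ((nS ξ : ℝ):ℂ)
        = ((∫ ξ in (-σ)..σ, w ξ * nS ξ : ℝ) : ℂ) := by
      rw [← intervalIntegral.integral_ofReal]
      exact intervalIntegral.integral_congr fun ξ _ => (Complex.ofReal_mul _ _).symm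
    apply Complex.ofReal_injective
    rw [← hAc]
    simp only [hnS, hwdef]
    rw [swap_lemma σ (fun ξ => 1 - |ξ|/σ)
      (continuous_const.sub (continuous_abs.div_const σ)) N lam x]
    push_cast
    simp only [Finset.mul_sum]
    refine Finset.sum_congr rfl fun j _ => Finset.sum_congr rfl fun k _ => ?_
    have h := fejer_complex σ hσ (x j - x k)
    push_cast at h
    rw [h]
    ring
  -- pointwise comparison and integral inequality
  have key : Phat σ * ∫ ξ in (-σ)..σ, w ξ * nS ξ ≤ ∫ ξ in (-σ)..σ, Phat ξ * nS ξ := by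
    rw [← intervalIntegral.integral_const_mul]
    apply intervalIntegral.integral_mono_on (by linarith : -σ ≤ σ)
    · exact ((continuous_const.mul (hwc.mul hnSc))).intervalIntegrable _ _
    · exact (hPc.mul hnSc).intervalIntegrable _ _
    · intro ξ hξ
      have habs : |ξ| ≤ σ := abs_le.2 ⟨hξ.1, hξ.2⟩
      have h0 : (0:ℝ) ≤ |ξ| := abs_nonneg ξ
      have h2 : Phat σ ≤ Phat |ξ| :=
        hmono ⟨h0, habs⟩ ⟨hσ.le, le_refl σ⟩ habs
      have h3 : Phat |ξ| = Phat ξ := by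
        rcases abs_choice ξ with h | h
        · rw [h]
        · rw [h, heven]
      have h4 : Phat σ * w ξ ≤ Phat ξ := by
        rw [hwdef]
        have ht : 1 - |ξ|/σ ≤ 1 := by
          have : 0 ≤ |ξ|/σ := div_nonneg h0 hσ.le
          linarith
        calc Phat σ * (1 - |ξ|/σ) ≤ Phat σ * 1 :=
              mul_le_mul_of_nonneg_left ht (hnonneg σ)
          _ = Phat σ := mul_one _
          _ ≤ Phat |ξ| := h2
          _ = Phat ξ := h3
      calc Phat σ * (w ξ * nS ξ) = (Phat σ * w ξ) * nS ξ := by ring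
        _ ≤ Phat ξ * nS ξ := mul_le_mul_of_nonneg_right h4 (hnS0 ξ)
  -- assemble
  rw [ge_iff_le, claim1]
  have hrhs : (σ / (2 * π)) * Phat σ *
      ∑ j, ∑ k, lam j * lam k * (_root_.sinc (σ * (x j - x k) / 2)) ^ 2
      = (1/(2*π)) * (Phat σ * ∫ ξ in (-σ)..σ, w ξ * nS ξ) := by
    rw [← claim2]
    ring
  rw [hrhs]
  exact mul_le_mul_of_nonneg_left key (by positivity)
end

section
/- Let X = {x_1,…,x_N} ⊂ ℝ with separation distance q > 0 and let Φ satisfy the hypotheses guaranteeing ∑_{j,k}λ_jλ_kΦ_σ(x_j−x_k) ≥ γ_min‖λ‖₂² with γ_min = q^{-1}Φ̂(2π/q), where additionally c₁(1+|ξ|²)^{-τ} ≤ Φ̂(ξ) ≤ c₂(1+|ξ|²)^{-τ} for some τ > 1/2 and constants 0 < c₁ ≤ c₂. If moreover the points lie in a bounded set so that N ≤ C h^{-1} for the mesh norm h and h is comparable to q, then the condition number of the matrix A = (Φ_σ(x_j − x_k)) satisfies cond(A) ≤ c q^{-2τ} for a constant c independent of X. -/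
open Real MeasureTheory

lemma trace_eq_sum_eigs {N : ℕ} (A : Matrix (Fin N) (Fin N) ℝ) (hA : A.IsHermitian) :
    A.trace = ∑ i, hA.eigenvalues i := by
  simpa using hA.trace_eq_sum_eigenvalues

lemma eig_quad {N : ℕ} (A : Matrix (Fin N) (Fin N) ℝ) (hA : A.IsHermitian) (i : Fin N) :
    (∑ j, ∑ k, hA.eigenvectorBasis i j * hA.eigenvectorBasis i k * A j k
      = hA.eigenvalues i) ∧ ∑ j, (hA.eigenvectorBasis i j) ^ 2 = 1 := by
  set v : Fin N → ℝ := fun j => hA.eigenvectorBasis i j with hv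
  have hnorm : ∑ j, v j ^ 2 = 1 := by
    have h1 : ‖hA.eigenvectorBasis i‖ = 1 := hA.eigenvectorBasis.orthonormal.1 i
    rw [EuclideanSpace.norm_eq] at h1
    have h2 : ∑ j, v j ^ 2 = ∑ j, ‖hA.eigenvectorBasis i j‖ ^ 2 := by
      simp [hv, Real.norm_eq_abs, sq_abs]
    rw [h2]
    have h3 : (0:ℝ) ≤ ∑ j, ‖hA.eigenvectorBasis i j‖ ^ 2 :=
      Finset.sum_nonneg fun _ _ => sq_nonneg _
    nlinarith [Real.sq_sqrt h3]
  refine ⟨?_, hnorm⟩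
  have hmv := hA.mulVec_eigenvectorBasis i
  have hmv' : ∀ j, ∑ k, A j k * v k = hA.eigenvalues i * v j := by
    intro j
    have := congrFun hmv j
    simpa [Matrix.mulVec, dotProduct, hv] using this
  calc ∑ j, ∑ k, v j * v k * A j k = ∑ j, v j * ∑ k, A j k * v k := by
        refine Finset.sum_congr rfl fun j _ => ?_
        rw [Finset.mul_sum]
        exact Finset.sum_congr rfl fun k _ => by ring
    _ = ∑ j, v j * (hA.eigenvalues i * v j) := by simp_rw [hmv']
    _ = hA.eigenvalues i * ∑ j, v j ^ 2 := by
        rw [Finset.mul_sum]; exact Finset.sum_congr rfl fun j _ => by ring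
    _ = hA.eigenvalues i := by rw [hnorm, mul_one]

lemma g_integrable {τ : ℝ} (hτ : 1/2 < τ) :
    Integrable (fun ξ : ℝ => (1 + ξ ^ 2) ^ (-τ)) := by
  have h := integrable_rpow_neg_one_add_norm_sq (E := ℝ) (μ := volume) (r := 2*τ)
    (by simp; linarith)
  have : (fun x : ℝ => ((1:ℝ) + ‖x‖ ^ 2) ^ (-(2*τ) / 2)) = fun ξ : ℝ => (1 + ξ ^ 2) ^ (-τ) := by
    funext x
    rw [Real.norm_eq_abs, sq_abs]
    ring_nf
  rwa [this] at h

theorem stmt_10 (Phat : ℝ → ℝ) (τ c₁ c₂ : ℝ) (hτ : 1 / 2 < τ)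
    (hc₁ : 0 < c₁) (hc₁₂ : c₁ ≤ c₂)
    (hlow : ∀ ξ : ℝ, c₁ * (1 + ξ ^ 2) ^ (-τ) ≤ Phat ξ)
    (hup : ∀ ξ : ℝ, Phat ξ ≤ c₂ * (1 + ξ ^ 2) ^ (-τ))
    (C c₃ c₄ : ℝ) (hC : 0 < C) (hc₃ : 0 < c₃) (hc₄ : 0 < c₄) :
    ∃ c > 0, ∀ (N : ℕ) (hN : 0 < N) (x : Fin N → ℝ) (q h : ℝ), 0 < q →
      (∀ j k, j ≠ k → 2 * q ≤ |x j - x k|) →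
      (N : ℝ) ≤ C * h⁻¹ → c₃ * q ≤ h → h ≤ c₄ * q →
      ∀ (Φσ : ℝ → ℝ) (A : Matrix (Fin N) (Fin N) ℝ),
        (∀ t : ℝ, (Φσ t : ℂ) = (1 / (2 * (π : ℂ))) *
            ∫ ξ in (-(2 * π / q))..(2 * π / q), (Phat ξ : ℂ) * Complex.exp (Complex.I * ξ * t)) →
        (∀ j k, A j k = Φσ (x j - x k)) →
        (∀ lam : Fin N → ℝ,
          q⁻¹ * Phat (2 * π / q) * ∑ j, (lam j) ^ 2 ≤ ∑ j, ∑ k, lam j * lam k * A j k) →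
        ∀ hA : A.PosDef,
          (Finset.univ.sup' (Finset.univ_nonempty_iff.mpr (Fin.pos_iff_nonempty.mp hN))
              hA.1.eigenvalues) /
          (Finset.univ.inf' (Finset.univ_nonempty_iff.mpr (Fin.pos_iff_nonempty.mp hN))
              hA.1.eigenvalues)
            ≤ c * q ^ (-(2 * τ)) := by
  have hπ : (0:ℝ) < π := Real.pi_pos
  have hc₂ : 0 < c₂ := lt_of_lt_of_le hc₁ hc₁₂
  set g : ℝ → ℝ := fun ξ => (1 + ξ ^ 2) ^ (-τ) with hgdef
  have hg : Integrable g := g_integrable hτ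
  have hgnn : ∀ ξ, 0 ≤ g ξ := fun ξ => Real.rpow_nonneg (by positivity) _
  set K : ℝ := ∫ ξ : ℝ, g ξ with hKdef
  have hK0 : 0 ≤ K := integral_nonneg hgnn
  set M : ℝ := (C / c₃) ^ 2 + 4 * π ^ 2 with hMdef
  have hM0 : 0 < M := by positivity
  set c' : ℝ := (C * c₂ * K / (2 * π * c₃ * c₁)) * M ^ τ with hc'def
  have hc'0 : 0 ≤ c' := by
    apply mul_nonneg
    · apply div_nonneg
      · positivity
      · positivity
    · exact Real.rpow_nonneg hM0.le _
  refine ⟨max c' 1, lt_of_lt_of_le one_pos (le_max_right _ _), ?_⟩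
  intro N hN x q h hq hsep hNC hc3q hhc4 Φσ A hΦ hAΦ hquad hA
  have hτ0 : 0 < τ := by linarith
  set σ : ℝ := 2 * π / q with hσdef
  have hσ0 : 0 < σ := by positivity
  have hh0 : 0 < h := lt_of_lt_of_le (by positivity) hc3q
  -- q ≤ C / c₃
  have hN1 : (1:ℝ) ≤ (N:ℝ) := by exact_mod_cast hN
  have hhC : h ≤ C := by
    have h1 : (1:ℝ) ≤ C * h⁻¹ := le_trans hN1 hNC
    rw [← div_eq_mul_inv] at h1
    exact (one_le_div hh0).mp h1
  have hqC : q ≤ C / c₃ := by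
    rw [le_div_iff₀ hc₃]
    calc q * c₃ = c₃ * q := by ring
      _ ≤ h := hc3q
      _ ≤ C := hhC
  -- value of Φσ 0
  have hΦ0 : Φσ 0 = (2 * π)⁻¹ * ∫ ξ in (-σ)..σ, Phat ξ := by
    have h0 := hΦ 0
    have hsimp : ∀ ξ : ℝ, (Phat ξ : ℂ) * Complex.exp (Complex.I * ξ * (0:ℝ)) = (Phat ξ : ℂ) := by
      intro ξ; simp
    rw [show ((0:ℝ):ℂ) = ((0:ℝ):ℂ) from rfl] at h0
    simp only [Complex.ofReal_zero, mul_zero, Complex.exp_zero, mul_one] at h0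
    rw [intervalIntegral.integral_ofReal] at h0
    have : ((Φσ 0 : ℝ) : ℂ) = (((2 * π)⁻¹ * ∫ ξ in (-σ)..σ, Phat ξ : ℝ) : ℂ) := by
      rw [h0]
      push_cast
      rw [hσdef]
      field_simp
    exact_mod_cast this
  -- bounds on Φσ 0
  have hgi : IntervalIntegrable g volume (-σ) σ := hg.intervalIntegrable
  have hsetle : ∫ ξ in (-σ)..σ, g ξ ≤ K := by
    rw [intervalIntegral.integral_of_le (by linarith)]
    exact setIntegral_le_integral hg (ae_of_all _ hgnn)
  have hΦ0nn : 0 ≤ Φσ 0 ∧ Φσ 0 ≤ (2 * π)⁻¹ * (c₂ * K) := by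
    rw [hΦ0]
    by_cases hPi : IntervalIntegrable Phat volume (-σ) σ
    · constructor
      · apply mul_nonneg (by positivity)
        apply intervalIntegral.integral_nonneg (by linarith)
        intro ξ _
        exact le_trans (by positivity) (hlow ξ)
      · apply mul_le_mul_of_nonneg_left _ (by positivity)
        calc (∫ ξ in (-σ)..σ, Phat ξ) ≤ ∫ ξ in (-σ)..σ, c₂ * g ξ := by
              apply intervalIntegral.integral_mono_on (by linarith) hPi (hgi.const_mul c₂)
              intro ξ _
              exact hup ξ
          _ = c₂ * ∫ ξ in (-σ)..σ, g ξ := intervalIntegral.integral_const_mul _ _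
          _ ≤ c₂ * K := mul_le_mul_of_nonneg_left hsetle hc₂.le
    · rw [intervalIntegral.integral_undef hPi, mul_zero]
      exact ⟨le_refl _, mul_nonneg (by positivity) (mul_nonneg hc₂.le hK0)⟩
  obtain ⟨hΦ0a, hΦ0b⟩ := hΦ0nn
  -- notation
  have hne : (Finset.univ : Finset (Fin N)).Nonempty :=
    Finset.univ_nonempty_iff.mpr (Fin.pos_iff_nonempty.mp hN)
  -- sup bound
  have htr : A.trace = (N:ℝ) * Φσ 0 := by
    rw [Matrix.trace]
    simp only [Matrix.diag]
    rw [Finset.sum_congr rfl fun j _ => by rw [hAΦ j j, sub_self]]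
    rw [Finset.sum_const, Finset.card_univ, Fintype.card_fin, nsmul_eq_mul]
  have hsup : Finset.univ.sup' hne hA.1.eigenvalues ≤ (N:ℝ) * Φσ 0 := by
    apply Finset.sup'_le
    intro i _
    calc hA.1.eigenvalues i ≤ ∑ j, hA.1.eigenvalues j :=
          Finset.single_le_sum (fun j _ => (hA.posSemidef.eigenvalues_nonneg j)) (Finset.mem_univ i)
      _ = A.trace := (trace_eq_sum_eigs A hA.1).symm
      _ = (N:ℝ) * Φσ 0 := htr
  have hNle : (N:ℝ) ≤ C * (c₃ * q)⁻¹ := by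
    refine le_trans hNC ?_
    apply mul_le_mul_of_nonneg_left _ hC.le
    exact inv_anti₀ (by positivity) hc3q
  have hU : Finset.univ.sup' hne hA.1.eigenvalues ≤ (C * (c₃ * q)⁻¹) * ((2 * π)⁻¹ * (c₂ * K)) := by
    refine le_trans hsup ?_
    exact mul_le_mul hNle hΦ0b hΦ0a (by positivity)
  -- inf bound
  set B : ℝ := (1 + σ ^ 2) ^ (-τ) with hBdef
  have hB0 : 0 < B := Real.rpow_pos_of_pos (by positivity) _
  have hL0 : 0 < q⁻¹ * (c₁ * B) := by positivity
  have hinf : q⁻¹ * (c₁ * B) ≤ Finset.univ.inf' hne hA.1.eigenvalues := by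
    apply Finset.le_inf'
    intro i _
    obtain ⟨hq1, hq2⟩ := eig_quad A hA.1 i
    have hqd := hquad (fun j => hA.1.eigenvectorBasis i j)
    rw [hq2, mul_one, hq1] at hqd
    refine le_trans ?_ hqd
    rw [mul_comm q⁻¹ (c₁ * B), mul_comm q⁻¹ (Phat σ)]
    apply mul_le_mul_of_nonneg_right _ (by positivity)
    exact hlow σ
  have hip0 : 0 < Finset.univ.inf' hne hA.1.eigenvalues := lt_of_lt_of_le hL0 hinf
  -- combine
  have hratio : Finset.univ.sup' hne hA.1.eigenvalues / Finset.univ.inf' hne hA.1.eigenvalues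
      ≤ ((C * (c₃ * q)⁻¹) * ((2 * π)⁻¹ * (c₂ * K))) / (q⁻¹ * (c₁ * B)) :=
    div_le_div₀ (by positivity) hU hL0 hinf
  have hUL : ((C * (c₃ * q)⁻¹) * ((2 * π)⁻¹ * (c₂ * K))) / (q⁻¹ * (c₁ * B))
      = (C * c₂ * K / (2 * π * c₃ * c₁)) * B⁻¹ := by
    field_simp
  -- bound B⁻¹
  have hBinv : B⁻¹ = (1 + σ ^ 2) ^ τ := by
    rw [hBdef, ← Real.rpow_neg (by positivity), neg_neg]
  have hbase : 1 + σ ^ 2 ≤ M * (q ^ 2)⁻¹ := by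
    have h1 : 1 + σ ^ 2 = (q ^ 2 + 4 * π ^ 2) * (q ^ 2)⁻¹ := by
      rw [hσdef]
      field_simp
      ring
    rw [h1, hMdef]
    apply mul_le_mul_of_nonneg_right _ (by positivity)
    have : q ^ 2 ≤ (C / c₃) ^ 2 := by
      apply pow_le_pow_left₀ hq.le hqC
    linarith
  have hBle : B⁻¹ ≤ M ^ τ * q ^ (-(2 * τ)) := by
    rw [hBinv]
    calc (1 + σ ^ 2) ^ τ ≤ (M * (q ^ 2)⁻¹) ^ τ :=
          Real.rpow_le_rpow (by positivity) hbase hτ0.le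
      _ = M ^ τ * ((q ^ 2)⁻¹) ^ τ := Real.mul_rpow hM0.le (by positivity)
      _ = M ^ τ * q ^ (-(2 * τ)) := by
          congr 1
          rw [← Real.rpow_natCast q 2, ← Real.rpow_neg hq.le, ← Real.rpow_mul hq.le]
          norm_num
  calc Finset.univ.sup' hne hA.1.eigenvalues / Finset.univ.inf' hne hA.1.eigenvalues
      ≤ (C * c₂ * K / (2 * π * c₃ * c₁)) * B⁻¹ := by rw [← hUL]; exact hratio
    _ ≤ (C * c₂ * K / (2 * π * c₃ * c₁)) * (M ^ τ * q ^ (-(2 * τ))) := by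
        apply mul_le_mul_of_nonneg_left hBle
        apply div_nonneg (by positivity) (by positivity)
    _ = c' * q ^ (-(2 * τ)) := by rw [hc'def]; ring
    _ ≤ max c' 1 * q ^ (-(2 * τ)) :=
        mul_le_mul_of_nonneg_right (le_max_left _ _) (Real.rpow_nonneg hq.le _)
end
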